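/- arXiv:2207.05852 — 2 statements merged into one kernel-verified Lean document; each statement's English description precedes it below -/
import Mathlib

section
/- Proposition 1(ii): For every stage h ∈ {1,...,H}, state s ∈ S and action a ∈ A such that there exists at least one policy π ∈ Π with p^π_h(s,a) > 0, the conditional return gap dominates the return gap: Δtilde_h(s,a) ≥ Δbar_h(s,a). -/
/-- A finite episodic MDP with horizon `H`, initial state `s1`,
transition kernel `p h s a s'` and mean rewards `r h s a` (for stages `h ∈ {1,…,H}`). -/
structure MDP (S A : Type) [Fintype S] [Fintype A] where
  H : ℕ
  H_pos : 1 ≤ H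
  s1 : S
  p : ℕ → S → A → S → ℝ
  r : ℕ → S → A → ℝ
  p_nonneg : ∀ h s a s', 1 ≤ h → h ≤ H → 0 ≤ p h s a s'
  p_sum_one : ∀ h s a, 1 ≤ h → h ≤ H → ∑ s' : S, p h s a s' = 1
  r_nonneg : ∀ h s a, 1 ≤ h → h ≤ H → 0 ≤ r h s a
  r_le_one : ∀ h s a, 1 ≤ h → h ≤ H → r h s a ≤ 1

namespace MDP

variable {S A : Type} [Fintype S] [Fintype A] [DecidableEq S] [DecidableEq A]
variable (M : MDP S A)

/-- Fuel-indexed value of policy `π`: `polValAux M π k s = V^π_{H+1-k}(s)`. -/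
noncomputable def polValAux (π : ℕ → S → A) : ℕ → S → ℝ
  | 0, _ => 0
  | k + 1, s =>
      M.r (M.H - k) s (π (M.H - k) s) +
        ∑ s' : S, M.p (M.H - k) s (π (M.H - k) s) s' * polValAux π k s'

/-- `V^π_h(s)`, for `1 ≤ h ≤ H + 1`. -/
noncomputable def polVal (π : ℕ → S → A) (h : ℕ) (s : S) : ℝ :=
  M.polValAux π (M.H + 1 - h) s

/-- `Q^π_h(s,a)`. -/
noncomputable def polQ (π : ℕ → S → A) (h : ℕ) (s : S) (a : A) : ℝ :=
  M.r h s a + ∑ s' : S, M.p h s a s' * M.polVal π (h + 1) s'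

/-- Fuel-indexed optimal value: `optValAux M k s = V*_{H+1-k}(s)`. -/
noncomputable def optValAux : ℕ → S → ℝ
  | 0, _ => 0
  | k + 1, s =>
      ⨆ a : A, (M.r (M.H - k) s a + ∑ s' : S, M.p (M.H - k) s a s' * optValAux k s')

/-- `V*_h(s)`, for `1 ≤ h ≤ H + 1`. -/
noncomputable def optVal (h : ℕ) (s : S) : ℝ := M.optValAux (M.H + 1 - h) s

/-- `Q*_h(s,a)`. -/
noncomputable def optQ (h : ℕ) (s : S) (a : A) : ℝ :=
  M.r h s a + ∑ s' : S, M.p h s a s' * M.optVal (h + 1) s'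

/-- Visitation probability `p^π_h(s)`, for `1 ≤ h ≤ H`. -/
noncomputable def visit (π : ℕ → S → A) : ℕ → S → ℝ
  | 0, _ => 0
  | 1, s => if s = M.s1 then 1 else 0
  | h + 2, s' => ∑ s : S, visit π (h + 1) s * M.p (h + 1) s (π (h + 1) s) s'

/-- State-action visitation probability `p^π_h(s,a)`. -/
noncomputable def visitSA (π : ℕ → S → A) (h : ℕ) (s : S) (a : A) : ℝ :=
  if π h s = a then M.visit π h s else 0

/-- Fuel-indexed conditional visitation: `cvisitAux M π s h k s' = p^π_{h+k}(s' | s, h)`. -/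
noncomputable def cvisitAux (π : ℕ → S → A) (s : S) (h : ℕ) : ℕ → S → ℝ
  | 0, s' => if s' = s then 1 else 0
  | k + 1, s' =>
      ∑ s'' : S, cvisitAux π s h k s'' * M.p (h + k) s'' (π (h + k) s'') s'

/-- Conditional visitation probability `p^π_ℓ(s' | s, h)`, for `h ≤ ℓ`. -/
noncomputable def cvisit (π : ℕ → S → A) (s : S) (h ℓ : ℕ) (s' : S) : ℝ :=
  M.cvisitAux π s h (ℓ - h) s'

/-- Value gap `Δ_h(s,a) = V*_h(s) - Q*_h(s,a)`. -/
noncomputable def valGap (h : ℕ) (s : S) (a : A) : ℝ := M.optVal h s - M.optQ h s a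

/-- The worst conditional value loss of policy `π`:
`max_{ℓ ∈ [H]} max_{s' : p^π_ℓ(s') > 0} (V*_ℓ(s') - V^π_ℓ(s'))`. -/
noncomputable def condRetGap (π : ℕ → S → A) : ℝ :=
  sSup {x : ℝ | ∃ ℓ, 1 ≤ ℓ ∧ ℓ ≤ M.H ∧ ∃ s' : S,
    M.visit π ℓ s' > 0 ∧ x = M.optVal ℓ s' - M.polVal π ℓ s'}

/-- Conditional return gap `Δtilde_h(s,a)`. -/
noncomputable def tildeGap (h : ℕ) (s : S) (a : A) : ℝ :=
  sInf {x : ℝ | ∃ π : ℕ → S → A, M.visitSA π h s a > 0 ∧ x = M.condRetGap π}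

/-- Return gap `Δbar_h(s,a) = V*_1(s1) - max_{π : p^π_h(s,a) > 0} V^π_1(s1)`. -/
noncomputable def barGap (h : ℕ) (s : S) (a : A) : ℝ :=
  M.optVal 1 M.s1 -
    sSup {x : ℝ | ∃ π : ℕ → S → A, M.visitSA π h s a > 0 ∧ x = M.polVal π 1 M.s1}

end MDP

lemma polValAux_le_aux {S A : Type} [Fintype S] [Fintype A] [DecidableEq S] [DecidableEq A]
    (M : MDP S A) (π : ℕ → S → A) :
    ∀ k, k ≤ M.H → ∀ s, M.polValAux π k s ≤ (k : ℝ) := by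
  intro k
  induction k with
  | zero => intro _ s; simp [MDP.polValAux]
  | succ k ih =>
    intro hk s
    have hk' : k ≤ M.H := Nat.le_of_succ_le hk
    have h1 : 1 ≤ M.H - k := by omega
    have h2 : M.H - k ≤ M.H := Nat.sub_le _ _
    have hr := M.r_le_one (M.H - k) s (π (M.H - k) s) h1 h2
    have hsum :
        ∑ s' : S, M.p (M.H - k) s (π (M.H - k) s) s' * M.polValAux π k s' ≤ (k : ℝ) := by
      calc ∑ s' : S, M.p (M.H - k) s (π (M.H - k) s) s' * M.polValAux π k s'
          ≤ ∑ s' : S, M.p (M.H - k) s (π (M.H - k) s) s' * (k : ℝ) := by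
            apply Finset.sum_le_sum
            intro s' _
            exact mul_le_mul_of_nonneg_left (ih hk' s')
              (M.p_nonneg _ _ _ _ h1 h2)
        _ = (k : ℝ) := by
            rw [← Finset.sum_mul, M.p_sum_one _ _ _ h1 h2, one_mul]
    show M.r (M.H - k) s (π (M.H - k) s) +
        ∑ s' : S, M.p (M.H - k) s (π (M.H - k) s) s' * M.polValAux π k s' ≤ ((k + 1 : ℕ) : ℝ)
    push_cast
    linarith

lemma condRetGap_bddAbove {S A : Type} [Fintype S] [Fintype A] [DecidableEq S] [DecidableEq A]
    (M : MDP S A) (π : ℕ → S → A) :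
    BddAbove {x : ℝ | ∃ ℓ, 1 ≤ ℓ ∧ ℓ ≤ M.H ∧ ∃ s' : S,
      M.visit π ℓ s' > 0 ∧ x = M.optVal ℓ s' - M.polVal π ℓ s'} := by
  apply Set.Finite.bddAbove
  apply Set.Finite.subset
    (Set.Finite.image (fun q : ℕ × S => M.optVal q.1 q.2 - M.polVal π q.1 q.2)
      ((Set.finite_Icc 1 M.H).prod Set.finite_univ))
  rintro x ⟨ℓ, h1, h2, s', _, rfl⟩
  exact ⟨(ℓ, s'), ⟨⟨h1, h2⟩, Set.mem_univ _⟩, rfl⟩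

/-- Proposition 1(ii): the conditional return gap dominates the return gap. -/
theorem tildeGap_ge_barGap {S A : Type} [Fintype S] [Nonempty S] [Fintype A] [Nonempty A]
    [DecidableEq S] [DecidableEq A] (M : MDP S A)
    (h : ℕ) (hh1 : 1 ≤ h) (hhH : h ≤ M.H) (s : S) (a : A)
    (hex : ∃ π : ℕ → S → A, M.visitSA π h s a > 0) :
    M.tildeGap h s a ≥ M.barGap h s a := by
  obtain ⟨π0, hπ0⟩ := hex
  rw [ge_iff_le]
  unfold MDP.tildeGap
  refine le_csInf ⟨M.condRetGap π0, ⟨π0, hπ0, rfl⟩⟩ ?_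
  rintro x ⟨π, hπ, rfl⟩
  -- condRetGap π ≥ V*_1(s1) - V^π_1(s1)
  have hvisit1 : M.visit π 1 M.s1 > 0 := by
    simp [MDP.visit]
  have hmem : M.optVal 1 M.s1 - M.polVal π 1 M.s1 ∈
      {x : ℝ | ∃ ℓ, 1 ≤ ℓ ∧ ℓ ≤ M.H ∧ ∃ s' : S,
        M.visit π ℓ s' > 0 ∧ x = M.optVal ℓ s' - M.polVal π ℓ s'} :=
    ⟨1, le_refl 1, M.H_pos, M.s1, hvisit1, rfl⟩
  have h1 : M.optVal 1 M.s1 - M.polVal π 1 M.s1 ≤ M.condRetGap π :=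
    le_csSup (condRetGap_bddAbove M π) hmem
  -- polVal π 1 s1 ≤ sSup of polVals
  have hbdd : BddAbove {x : ℝ | ∃ π' : ℕ → S → A,
      M.visitSA π' h s a > 0 ∧ x = M.polVal π' 1 M.s1} := by
    refine ⟨(M.H : ℝ), ?_⟩
    rintro x ⟨π', _, rfl⟩
    have : M.H + 1 - 1 = M.H := by omega
    unfold MDP.polVal
    rw [this]
    exact polValAux_le_aux M π' M.H le_rfl M.s1
  have h2 : M.polVal π 1 M.s1 ≤
      sSup {x : ℝ | ∃ π' : ℕ → S → A,
        M.visitSA π' h s a > 0 ∧ x = M.polVal π' 1 M.s1} :=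
    le_csSup hbdd ⟨π, hπ, rfl⟩
  unfold MDP.barGap
  linarith
end

section
/- Lemma (deterministic form of the stopping-threshold bound): Let π be any policy that is greedy with respect to the optimistic Q-values, i.e., π_h(s) ∈ argmax_{a∈A} Q̄_h(s,a) for all h ∈ {1,...,H} and s ∈ S. Then max_{a∈A} Q̄_1(s1,a) − max_{a∈A} Qlow_1(s1,a) ≤ 3 Σ_{h=1}^{H} Σ_{s∈S} Σ_{a∈A} p^π_h(s,a) · b_h(s,a). -/
namespace MDP

section Estimates

variable {S A : Type} [Fintype S] [Fintype A] [DecidableEq S] [DecidableEq A] [Nonempty A]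
variable (M : MDP S A)
variable (rhat : ℕ → S → A → ℝ) (phat : ℕ → S → A → S → ℝ) (b : ℕ → S → A → ℝ)

/-- Fuel-indexed optimistic value: `VbarAux M rhat phat b k s = V̄_{H+1-k}(s)`. -/
noncomputable def VbarAux : ℕ → S → ℝ
  | 0, _ => 0
  | k + 1, s => ⨆ a : A, min ((k : ℝ) + 1)
      (rhat (M.H - k) s a + b (M.H - k) s a +
        ∑ s' : S, phat (M.H - k) s a s' * VbarAux k s')

/-- Optimistic value `V̄_h(s)`, for `1 ≤ h ≤ H + 1`. -/
noncomputable def Vbar (h : ℕ) (s : S) : ℝ := VbarAux M rhat phat b (M.H + 1 - h) s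

/-- Optimistic Q-value `Q̄_h(s,a)`. -/
noncomputable def Qbar (h : ℕ) (s : S) (a : A) : ℝ :=
  min ((M.H : ℝ) - h + 1)
    (rhat h s a + b h s a + ∑ s' : S, phat h s a s' * Vbar M rhat phat b (h + 1) s')

/-- Fuel-indexed pessimistic value: `VlowAux M rhat phat b k s = Vlow_{H+1-k}(s)`. -/
noncomputable def VlowAux : ℕ → S → ℝ
  | 0, _ => 0
  | k + 1, s => ⨆ a : A, max 0
      (rhat (M.H - k) s a - b (M.H - k) s a +
        ∑ s' : S, phat (M.H - k) s a s' * VlowAux k s')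

/-- Pessimistic value `Vlow_h(s)`, for `1 ≤ h ≤ H + 1`. -/
noncomputable def Vlow (h : ℕ) (s : S) : ℝ := VlowAux M rhat phat b (M.H + 1 - h) s

/-- Pessimistic Q-value `Qlow_h(s,a)`. -/
noncomputable def Qlow (h : ℕ) (s : S) (a : A) : ℝ :=
  max 0 (rhat h s a - b h s a + ∑ s' : S, phat h s a s' * Vlow M rhat phat b (h + 1) s')

variable (π : ℕ → S → A)

/-- Fuel-indexed policy-specific optimistic value `V̄^π`. -/
noncomputable def VbarPolAux : ℕ → S → ℝ
  | 0, _ => 0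
  | k + 1, s => min ((k : ℝ) + 1)
      (rhat (M.H - k) s (π (M.H - k) s) + b (M.H - k) s (π (M.H - k) s) +
        ∑ s' : S, phat (M.H - k) s (π (M.H - k) s) s' * VbarPolAux k s')

/-- Policy-specific optimistic value `V̄^π_h(s)`. -/
noncomputable def VbarPol (h : ℕ) (s : S) : ℝ := VbarPolAux M rhat phat b π (M.H + 1 - h) s

/-- Policy-specific optimistic Q-value `Q̄^π_h(s,a)`. -/
noncomputable def QbarPol (h : ℕ) (s : S) (a : A) : ℝ :=
  min ((M.H : ℝ) - h + 1)
    (rhat h s a + b h s a + ∑ s' : S, phat h s a s' * VbarPol M rhat phat b π (h + 1) s')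

/-- Fuel-indexed policy-specific pessimistic value `Vlow^π`. -/
noncomputable def VlowPolAux : ℕ → S → ℝ
  | 0, _ => 0
  | k + 1, s => max 0
      (rhat (M.H - k) s (π (M.H - k) s) - b (M.H - k) s (π (M.H - k) s) +
        ∑ s' : S, phat (M.H - k) s (π (M.H - k) s) s' * VlowPolAux k s')

/-- Policy-specific pessimistic value `Vlow^π_h(s)`. -/
noncomputable def VlowPol (h : ℕ) (s : S) : ℝ := VlowPolAux M rhat phat b π (M.H + 1 - h) s

/-- Policy-specific pessimistic Q-value `Qlow^π_h(s,a)`. -/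
noncomputable def QlowPol (h : ℕ) (s : S) (a : A) : ℝ :=
  max 0 (rhat h s a - b h s a + ∑ s' : S, phat h s a s' * VlowPol M rhat phat b π (h + 1) s')

end Estimates

end MDP


namespace MDP

section Proof

variable {S A : Type} [Fintype S] [Fintype A] [DecidableEq S] [DecidableEq A] [Nonempty A]
variable (M : MDP S A) (rhat : ℕ → S → A → ℝ) (phat : ℕ → S → A → S → ℝ) (b : ℕ → S → A → ℝ)

private lemma bddA (f : A → ℝ) : BddAbove (Set.range f) :=
  Set.Finite.bddAbove (Set.finite_range f)

private lemma le_ciSup' {f : A → ℝ} {y : ℝ} (a : A) (h : y ≤ f a) : y ≤ ⨆ x, f x :=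
  le_trans h (le_ciSup (bddA f) a)

private lemma VbarAux_le : ∀ k, ∀ s : S, VbarAux M rhat phat b k s ≤ (k : ℝ) := by
  intro k
  induction k with
  | zero => intro s; simp [VbarAux]
  | succ k ih =>
    intro s
    rw [VbarAux]
    refine ciSup_le fun a => ?_
    push_cast
    exact min_le_left _ _

private lemma VlowAux_nonneg : ∀ k, ∀ s : S, 0 ≤ VlowAux M rhat phat b k s := by
  intro k
  induction k with
  | zero => intro s; simp [VlowAux]
  | succ k ih =>
    intro s
    rw [VlowAux]
    exact le_ciSup' (Classical.arbitrary A) (le_max_left 0 _)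

private lemma VbarAux_nonneg
    (hphat_nonneg : ∀ h s a s', 1 ≤ h → h ≤ M.H → 0 ≤ phat h s a s')
    (hconc : ∀ h s a, 1 ≤ h → h ≤ M.H →
      |rhat h s a - M.r h s a| +
        ((M.H : ℝ) - h) * ∑ s' : S, |phat h s a s' - M.p h s a s'| ≤ b h s a) :
    ∀ k, k ≤ M.H → ∀ s : S, 0 ≤ VbarAux M rhat phat b k s := by
  intro k
  induction k with
  | zero => intro _ s; simp [VbarAux]
  | succ k ih =>
    intro hk s
    have h1 : 1 ≤ M.H - k := by omega
    have h2 : M.H - k ≤ M.H := by omega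
    obtain ⟨a⟩ := (inferInstance : Nonempty A)
    have hnn : 0 ≤ ((M.H : ℝ) - (M.H - k : ℕ)) *
        ∑ s' : S, |phat (M.H - k) s a s' - M.p (M.H - k) s a s'| := by
      refine mul_nonneg ?_ (Finset.sum_nonneg fun _ _ => abs_nonneg _)
      have : ((M.H - k : ℕ) : ℝ) ≤ (M.H : ℝ) := Nat.cast_le.2 h2
      linarith
    have habs : |rhat (M.H - k) s a - M.r (M.H - k) s a| ≤ b (M.H - k) s a := by
      have := hconc (M.H - k) s a h1 h2
      linarith
    have hr0 := M.r_nonneg (M.H - k) s a h1 h2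
    obtain ⟨hab1, hab2⟩ := abs_le.1 habs
    have hterm : (0 : ℝ) ≤ min ((k : ℝ) + 1)
        (rhat (M.H - k) s a + b (M.H - k) s a +
          ∑ s' : S, phat (M.H - k) s a s' * VbarAux M rhat phat b k s') := by
      refine le_min (by positivity) ?_
      have hsum : 0 ≤ ∑ s' : S, phat (M.H - k) s a s' * VbarAux M rhat phat b k s' :=
        Finset.sum_nonneg fun s' _ =>
          mul_nonneg (hphat_nonneg _ _ _ _ h1 h2) (ih (by omega) s')
      linarith
    rw [VbarAux]
    exact le_ciSup' a hterm

private lemma VlowAux_le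
    (hphat_nonneg : ∀ h s a s', 1 ≤ h → h ≤ M.H → 0 ≤ phat h s a s')
    (hphat_sum : ∀ h s a, 1 ≤ h → h ≤ M.H → ∑ s' : S, phat h s a s' = 1)
    (hconc : ∀ h s a, 1 ≤ h → h ≤ M.H →
      |rhat h s a - M.r h s a| +
        ((M.H : ℝ) - h) * ∑ s' : S, |phat h s a s' - M.p h s a s'| ≤ b h s a) :
    ∀ k, k ≤ M.H → ∀ s : S, VlowAux M rhat phat b k s ≤ (k : ℝ) := by
  intro k
  induction k with
  | zero => intro _ s; simp [VlowAux]
  | succ k ih =>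
    intro hk s
    have h1 : 1 ≤ M.H - k := by omega
    have h2 : M.H - k ≤ M.H := by omega
    rw [VlowAux]
    refine ciSup_le fun a => ?_
    have hnn : 0 ≤ ((M.H : ℝ) - (M.H - k : ℕ)) *
        ∑ s' : S, |phat (M.H - k) s a s' - M.p (M.H - k) s a s'| := by
      refine mul_nonneg ?_ (Finset.sum_nonneg fun _ _ => abs_nonneg _)
      have : ((M.H - k : ℕ) : ℝ) ≤ (M.H : ℝ) := Nat.cast_le.2 h2
      linarith
    have habs : |rhat (M.H - k) s a - M.r (M.H - k) s a| ≤ b (M.H - k) s a := by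
      have := hconc (M.H - k) s a h1 h2
      linarith
    obtain ⟨hab1, hab2⟩ := abs_le.1 habs
    have hr1 := M.r_le_one (M.H - k) s a h1 h2
    have hsum : ∑ s' : S, phat (M.H - k) s a s' * VlowAux M rhat phat b k s' ≤ (k : ℝ) := by
      calc ∑ s' : S, phat (M.H - k) s a s' * VlowAux M rhat phat b k s'
          ≤ ∑ s' : S, phat (M.H - k) s a s' * (k : ℝ) :=
            Finset.sum_le_sum fun s' _ =>
              mul_le_mul_of_nonneg_left (ih (by omega) s') (hphat_nonneg _ _ _ _ h1 h2)
        _ = (k : ℝ) := by rw [← Finset.sum_mul, hphat_sum _ _ _ h1 h2, one_mul]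
    push_cast
    refine max_le (by positivity) (by linarith)

private lemma Vbar_eq (h : ℕ) (h1 : 1 ≤ h) (hH : h ≤ M.H) (s : S) :
    Vbar M rhat phat b h s = ⨆ a : A, Qbar M rhat phat b h s a := by
  have hk : M.H + 1 - h = (M.H - h) + 1 := by omega
  have hk2 : M.H - (M.H - h) = h := Nat.sub_sub_self hH
  have hk3 : M.H + 1 - (h + 1) = M.H - h := by omega
  have hc : ((M.H - h : ℕ) : ℝ) + 1 = (M.H : ℝ) - (h : ℕ) + 1 := by
    push_cast [Nat.cast_sub hH]; ring
  unfold Qbar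
  unfold Vbar
  rw [hk, VbarAux, hk2]
  simp only [hk3, hc]

private lemma Vlow_eq (h : ℕ) (h1 : 1 ≤ h) (hH : h ≤ M.H) (s : S) :
    Vlow M rhat phat b h s = ⨆ a : A, Qlow M rhat phat b h s a := by
  have hk : M.H + 1 - h = (M.H - h) + 1 := by omega
  have hk2 : M.H - (M.H - h) = h := Nat.sub_sub_self hH
  have hk3 : M.H + 1 - (h + 1) = M.H - h := by omega
  unfold Qlow
  unfold Vlow
  rw [hk, VlowAux, hk2]
  simp only [hk3]

private lemma core
    (hphat_nonneg : ∀ h s a s', 1 ≤ h → h ≤ M.H → 0 ≤ phat h s a s')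
    (hphat_sum : ∀ h s a, 1 ≤ h → h ≤ M.H → ∑ s' : S, phat h s a s' = 1)
    (hconc : ∀ h s a, 1 ≤ h → h ≤ M.H →
      |rhat h s a - M.r h s a| +
        ((M.H : ℝ) - h) * ∑ s' : S, |phat h s a s' - M.p h s a s'| ≤ b h s a)
    (π : ℕ → S → A)
    (hgreedy : ∀ h s, 1 ≤ h → h ≤ M.H → ∀ a : A,
      MDP.Qbar M rhat phat b h s a ≤ MDP.Qbar M rhat phat b h s (π h s))
    (h : ℕ) (h1 : 1 ≤ h) (hH : h ≤ M.H) (s : S) :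
    Vbar M rhat phat b h s - Vlow M rhat phat b h s ≤
      3 * b h s (π h s) + ∑ s' : S, M.p h s (π h s) s' *
        (Vbar M rhat phat b (h+1) s' - Vlow M rhat phat b (h+1) s') := by
  set a := π h s with ha
  have hk3 : M.H + 1 - (h + 1) = M.H - h := by omega
  have hcH : ((M.H - h : ℕ) : ℝ) = (M.H : ℝ) - (h : ℕ) := by push_cast [Nat.cast_sub hH]; ring
  have hV : Vbar M rhat phat b h s = Qbar M rhat phat b h s a := by
    rw [Vbar_eq M rhat phat b h h1 hH s]
    exact le_antisymm (ciSup_le (hgreedy h s h1 hH)) (le_ciSup' a le_rfl)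
  have hL : Qlow M rhat phat b h s a ≤ Vlow M rhat phat b h s := by
    rw [Vlow_eq M rhat phat b h h1 hH s]
    exact le_ciSup' a le_rfl
  have hQbar : Qbar M rhat phat b h s a ≤ rhat h s a + b h s a +
      ∑ s' : S, phat h s a s' * Vbar M rhat phat b (h+1) s' := min_le_right _ _
  have hQlow : rhat h s a - b h s a +
      ∑ s' : S, phat h s a s' * Vlow M rhat phat b (h+1) s' ≤
      Qlow M rhat phat b h s a := le_max_right _ _
  have hVbub : ∀ s' : S, Vbar M rhat phat b (h+1) s' ≤ (M.H : ℝ) - h := by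
    intro s'; unfold Vbar; rw [hk3, ← hcH]; exact VbarAux_le M rhat phat b _ s'
  have hVbnn : ∀ s' : S, 0 ≤ Vbar M rhat phat b (h+1) s' := by
    intro s'; unfold Vbar; rw [hk3]
    exact VbarAux_nonneg M rhat phat b hphat_nonneg hconc _ (by omega) s'
  have hVlub : ∀ s' : S, Vlow M rhat phat b (h+1) s' ≤ (M.H : ℝ) - h := by
    intro s'; unfold Vlow; rw [hk3, ← hcH]
    exact VlowAux_le M rhat phat b hphat_nonneg hphat_sum hconc _ (by omega) s'
  have hVlnn : ∀ s' : S, 0 ≤ Vlow M rhat phat b (h+1) s' := by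
    intro s'; unfold Vlow; rw [hk3]; exact VlowAux_nonneg M rhat phat b _ s'
  have key : ∑ s' : S, phat h s a s' * Vbar M rhat phat b (h+1) s' -
      ∑ s' : S, phat h s a s' * Vlow M rhat phat b (h+1) s' ≤
      (∑ s' : S, M.p h s a s' *
        (Vbar M rhat phat b (h+1) s' - Vlow M rhat phat b (h+1) s')) + b h s a := by
    have e1 : ∑ s' : S, phat h s a s' * Vbar M rhat phat b (h+1) s' -
        ∑ s' : S, phat h s a s' * Vlow M rhat phat b (h+1) s' =
        (∑ s' : S, M.p h s a s' *
          (Vbar M rhat phat b (h+1) s' - Vlow M rhat phat b (h+1) s')) +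
        ∑ s' : S, (phat h s a s' - M.p h s a s') *
          (Vbar M rhat phat b (h+1) s' - Vlow M rhat phat b (h+1) s') := by
      rw [← Finset.sum_add_distrib, ← Finset.sum_sub_distrib]
      exact Finset.sum_congr rfl fun s' _ => by ring
    have e2 : ∑ s' : S, (phat h s a s' - M.p h s a s') *
        (Vbar M rhat phat b (h+1) s' - Vlow M rhat phat b (h+1) s') ≤
        ((M.H : ℝ) - h) * ∑ s' : S, |phat h s a s' - M.p h s a s'| := by
      rw [Finset.mul_sum]
      refine Finset.sum_le_sum fun s' _ => ?_
      have hWabs : |Vbar M rhat phat b (h+1) s' - Vlow M rhat phat b (h+1) s'| ≤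
          (M.H : ℝ) - h := by
        rw [abs_le]
        constructor
        · have := hVlub s'; have := hVbnn s'; linarith
        · have := hVbub s'; have := hVlnn s'; linarith
      calc (phat h s a s' - M.p h s a s') *
            (Vbar M rhat phat b (h+1) s' - Vlow M rhat phat b (h+1) s') ≤
          |(phat h s a s' - M.p h s a s') *
            (Vbar M rhat phat b (h+1) s' - Vlow M rhat phat b (h+1) s')| := le_abs_self _
        _ = |phat h s a s' - M.p h s a s'| *
            |Vbar M rhat phat b (h+1) s' - Vlow M rhat phat b (h+1) s'| := abs_mul _ _
        _ ≤ |phat h s a s' - M.p h s a s'| * ((M.H : ℝ) - h) :=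
            mul_le_mul_of_nonneg_left hWabs (abs_nonneg _)
        _ = ((M.H : ℝ) - h) * |phat h s a s' - M.p h s a s'| := mul_comm _ _
    have e3 : ((M.H : ℝ) - h) * ∑ s' : S, |phat h s a s' - M.p h s a s'| ≤ b h s a := by
      have := hconc h s a h1 hH
      have := abs_nonneg (rhat h s a - M.r h s a)
      linarith
    linarith
  linarith

private lemma visit_nonneg' (π : ℕ → S → A) :
    ∀ h, h ≤ M.H + 1 → ∀ s : S, 0 ≤ M.visit π h s := by
  intro h
  induction h with
  | zero => intro _ s; simp [visit]
  | succ n ih =>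
    intro hn s
    match n, ih, hn with
    | 0, _, _ =>
      rw [show M.visit π 1 s = if s = M.s1 then 1 else 0 from rfl]
      split <;> norm_num
    | (m+1), ih, hn =>
      rw [show M.visit π (m+2) s =
        ∑ s' : S, M.visit π (m+1) s' * M.p (m+1) s' (π (m+1) s') s from rfl]
      exact Finset.sum_nonneg fun s' _ => mul_nonneg (ih (by omega) s')
        (M.p_nonneg _ _ _ _ (by omega) (by omega))

private lemma tele
    (hphat_nonneg : ∀ h s a s', 1 ≤ h → h ≤ M.H → 0 ≤ phat h s a s')
    (hphat_sum : ∀ h s a, 1 ≤ h → h ≤ M.H → ∑ s' : S, phat h s a s' = 1)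
    (hconc : ∀ h s a, 1 ≤ h → h ≤ M.H →
      |rhat h s a - M.r h s a| +
        ((M.H : ℝ) - h) * ∑ s' : S, |phat h s a s' - M.p h s a s'| ≤ b h s a)
    (π : ℕ → S → A)
    (hgreedy : ∀ h s, 1 ≤ h → h ≤ M.H → ∀ a : A,
      MDP.Qbar M rhat phat b h s a ≤ MDP.Qbar M rhat phat b h s (π h s)) :
    ∀ k h, h + k = M.H + 1 → 1 ≤ h →
      ∑ s : S, M.visit π h s * (Vbar M rhat phat b h s - Vlow M rhat phat b h s) ≤
        3 * ∑ ℓ ∈ Finset.Icc h M.H, ∑ s : S, ∑ a : A, M.visitSA π ℓ s a * b ℓ s a := by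
  intro k
  induction k with
  | zero =>
    intro h hk h1
    have hh : h = M.H + 1 := by omega
    subst hh
    have hz : ∀ s : S, Vbar M rhat phat b (M.H + 1) s -
        Vlow M rhat phat b (M.H + 1) s = 0 := by
      intro s
      unfold Vbar Vlow
      rw [show M.H + 1 - (M.H + 1) = 0 by omega]
      simp [VbarAux, VlowAux]
    rw [Finset.Icc_eq_empty (by omega)]
    simp [hz]
  | succ k ih =>
    intro h hk h1
    have hH : h ≤ M.H := by omega
    have step1 : ∑ s : S, M.visit π h s *
        (Vbar M rhat phat b h s - Vlow M rhat phat b h s) ≤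
        ∑ s : S, M.visit π h s * (3 * b h s (π h s) + ∑ s' : S, M.p h s (π h s) s' *
          (Vbar M rhat phat b (h+1) s' - Vlow M rhat phat b (h+1) s')) :=
      Finset.sum_le_sum fun s _ => mul_le_mul_of_nonneg_left
        (core M rhat phat b hphat_nonneg hphat_sum hconc π hgreedy h h1 hH s)
        (visit_nonneg' M π h (by omega) s)
    have hvv : ∀ s' : S, M.visit π (h+1) s' =
        ∑ s : S, M.visit π h s * M.p h s (π h s) s' := by
      obtain ⟨m, rfl⟩ : ∃ m, h = m + 1 := ⟨h - 1, by omega⟩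
      intro s'; rfl
    have hsa : ∀ hh, ∑ s : S, ∑ a : A, M.visitSA π hh s a * b hh s a =
        ∑ s : S, M.visit π hh s * b hh s (π hh s) := by
      intro hh
      refine Finset.sum_congr rfl fun s _ => ?_
      simp [MDP.visitSA, ite_mul]
    have step2 : ∑ s : S, M.visit π h s * (3 * b h s (π h s) + ∑ s' : S, M.p h s (π h s) s' *
          (Vbar M rhat phat b (h+1) s' - Vlow M rhat phat b (h+1) s')) =
        3 * (∑ s : S, ∑ a : A, M.visitSA π h s a * b h s a) +
        ∑ s' : S, M.visit π (h+1) s' *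
          (Vbar M rhat phat b (h+1) s' - Vlow M rhat phat b (h+1) s') := by
      rw [hsa h]
      simp only [mul_add, Finset.sum_add_distrib]
      congr 1
      · rw [Finset.mul_sum]
        exact Finset.sum_congr rfl fun s _ => by ring
      · calc ∑ s : S, M.visit π h s * ∑ s' : S, M.p h s (π h s) s' *
              (Vbar M rhat phat b (h+1) s' - Vlow M rhat phat b (h+1) s')
            = ∑ s : S, ∑ s' : S, (M.visit π h s * M.p h s (π h s) s') *
              (Vbar M rhat phat b (h+1) s' - Vlow M rhat phat b (h+1) s') := by
              refine Finset.sum_congr rfl fun s _ => ?_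
              rw [Finset.mul_sum]
              exact Finset.sum_congr rfl fun s' _ => by ring
          _ = ∑ s' : S, ∑ s : S, (M.visit π h s * M.p h s (π h s) s') *
              (Vbar M rhat phat b (h+1) s' - Vlow M rhat phat b (h+1) s') :=
              Finset.sum_comm
          _ = ∑ s' : S, M.visit π (h+1) s' *
              (Vbar M rhat phat b (h+1) s' - Vlow M rhat phat b (h+1) s') := by
              refine Finset.sum_congr rfl fun s' _ => ?_
              rw [hvv s', Finset.sum_mul]
    have step3 := ih (h+1) (by omega) (by omega)
    have hsplit : Finset.Icc h M.H = insert h (Finset.Icc (h+1) M.H) := by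
      ext x
      simp only [Finset.mem_Icc, Finset.mem_insert]
      omega
    rw [hsplit, Finset.sum_insert (by simp)]
    rw [step2] at step1
    linarith

end Proof

end MDP

/-- Deterministic form of the stopping-threshold bound: the width of the confidence interval
at the initial state is bounded by three times the expected sum of bonuses of the policy
greedy w.r.t. the optimistic Q-values. -/
theorem stopping_threshold_bound {S A : Type} [Fintype S] [Nonempty S] [Fintype A] [Nonempty A]
    [DecidableEq S] [DecidableEq A] (M : MDP S A)
    (rhat : ℕ → S → A → ℝ) (phat : ℕ → S → A → S → ℝ) (b : ℕ → S → A → ℝ)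
    (hphat_nonneg : ∀ h s a s', 1 ≤ h → h ≤ M.H → 0 ≤ phat h s a s')
    (hphat_sum : ∀ h s a, 1 ≤ h → h ≤ M.H → ∑ s' : S, phat h s a s' = 1)
    (hb_nonneg : ∀ h s a, 1 ≤ h → h ≤ M.H → 0 ≤ b h s a)
    (hconc : ∀ h s a, 1 ≤ h → h ≤ M.H →
      |rhat h s a - M.r h s a| +
        ((M.H : ℝ) - h) * ∑ s' : S, |phat h s a s' - M.p h s a s'| ≤ b h s a)
    (π : ℕ → S → A)
    (hgreedy : ∀ h s, 1 ≤ h → h ≤ M.H → ∀ a : A,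
      MDP.Qbar M rhat phat b h s a ≤ MDP.Qbar M rhat phat b h s (π h s)) :
    (⨆ a : A, MDP.Qbar M rhat phat b 1 M.s1 a) - (⨆ a : A, MDP.Qlow M rhat phat b 1 M.s1 a) ≤
      3 * ∑ h ∈ Finset.Icc 1 M.H, ∑ s : S, ∑ a : A, M.visitSA π h s a * b h s a := by
  have h1 := M.H_pos
  have e1 : (⨆ a : A, MDP.Qbar M rhat phat b 1 M.s1 a) = MDP.Vbar M rhat phat b 1 M.s1 :=
    (MDP.Vbar_eq M rhat phat b 1 le_rfl h1 M.s1).symm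
  have e2 : (⨆ a : A, MDP.Qlow M rhat phat b 1 M.s1 a) = MDP.Vlow M rhat phat b 1 M.s1 :=
    (MDP.Vlow_eq M rhat phat b 1 le_rfl h1 M.s1).symm
  rw [e1, e2]
  have htele := MDP.tele M rhat phat b hphat_nonneg hphat_sum hconc π hgreedy M.H 1
    (by omega) le_rfl
  have hv1 : ∑ s : S, M.visit π 1 s *
      (MDP.Vbar M rhat phat b 1 s - MDP.Vlow M rhat phat b 1 s) =
      MDP.Vbar M rhat phat b 1 M.s1 - MDP.Vlow M rhat phat b 1 M.s1 := by
    have : ∀ s : S, M.visit π 1 s = if s = M.s1 then 1 else 0 := fun s => rfl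
    simp [this, ite_mul]
  rw [hv1] at htele
  exact htele
end
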